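/- Let R be a dwindling convergent SRS over a finite alphabet Σ, let A be a nonempty irreducible string and X a nonempty string over Σ, and suppose A·X →*_R S. Then there exist b ≤ |A| and a strictly increasing index sequence β = (β1, β2, …, βc) with 1 ≤ β1 < β2 < ⋯ < βc ≤ |X| such that S = A_[1:b] · X_[β]. Moreover, if S ≠ A·X then c < |X|. -/

import Mathlib

/- Strings over an alphabet `σ` are modelled as `List σ`; a finite string
rewriting system is a finite list of rules `(l, r)`. -/

namespace SRS

variable {σ : Type*}

/-- One-step rewrite relation: `u →_R v`. -/
def Step (R : List (List σ × List σ)) (u v : List σ) : Prop :=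
  ∃ x y l r, (l, r) ∈ R ∧ u = x ++ l ++ y ∧ v = x ++ r ++ y

/-- `u →*_R v`: reflexive-transitive closure. -/
def Reduces (R : List (List σ × List σ)) : List σ → List σ → Prop :=
  Relation.ReflTransGen (Step R)

/-- `u ↔*_R v`: reflexive-symmetric-transitive closure. -/
def Equiv (R : List (List σ × List σ)) : List σ → List σ → Prop :=
  Relation.EqvGen (Step R)

/-- `u ↓_R v`: joinability, i.e. a common reduct exists. -/
def Joins (R : List (List σ × List σ)) : List σ → List σ → Prop :=
  Relation.Join (Reduces R)

/-- A string is irreducible if no rule applies to it. -/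
def Irreducible (R : List (List σ × List σ)) (u : List σ) : Prop :=
  ∀ v, ¬ Step R u v

/-- `u →!_R v`: `v` is an `R`-normal form of `u`. -/
def NormalizesTo (R : List (List σ × List σ)) (u v : List σ) : Prop :=
  Reduces R u v ∧ Irreducible R v

/-- Terminating: no infinite chain of rewrite steps. -/
def Terminating (R : List (List σ × List σ)) : Prop :=
  ¬ ∃ f : ℕ → List σ, ∀ n, Step R (f n) (f (n + 1))

def Confluent (R : List (List σ × List σ)) : Prop :=
  ∀ t s₁ s₂, Reduces R t s₁ → Reduces R t s₂ →
    ∃ t', Reduces R s₁ t' ∧ Reduces R s₂ t'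

def Convergent (R : List (List σ × List σ)) : Prop :=
  Terminating R ∧ Confluent R

/-- Dwindling: every right-hand side is a proper prefix of its left-hand side. -/
def Dwindling (R : List (List σ × List σ)) : Prop :=
  ∀ p ∈ R, p.2 <+: p.1 ∧ p.2 ≠ p.1

/-- Monadic: length-reducing with right-hand sides of length at most 1. -/
def Monadic (R : List (List σ × List σ)) : Prop :=
  ∀ p ∈ R, p.2.length < p.1.length ∧ p.2.length ≤ 1

/-- `MP α`: normal forms of `p ++ s` with `p` a prefix of `α` and `s` a single
symbol or the empty string. -/
def MP (R : List (List σ × List σ)) (α : List σ) : Set (List σ) :=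
  { γ | ∃ p s, p <+: α ∧ s.length ≤ 1 ∧ NormalizesTo R (p ++ s) γ }

end SRS

/-- `subseqIdx X β` is the string `X_[β]` = `X_[β₁] X_[β₂] ⋯ X_[β_c]` for a
1-indexed index sequence `β` (each index `i` selects the `i`-th symbol of `X`). -/
def subseqIdx {σ : Type*} (X : List σ) (β : List ℕ) : List σ :=
  (β.map fun i => (X.drop (i - 1)).take 1).flatten


section helpers

variable {α : Type*}

private lemma flat1_len (L : List (List α)) (h : ∀ s ∈ L, s.length = 1) :
    L.flatten.length = L.length := by
  induction L with
  | nil => simp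
  | cons s L ih =>
    simp only [List.flatten_cons, List.length_append, List.length_cons,
      h s (by simp), ih (fun t ht => h t (by simp [ht]))]
    omega

private lemma flat1_take (L : List (List α)) (h : ∀ s ∈ L, s.length = 1) (m : ℕ) :
    L.flatten.take m = (L.take m).flatten := by
  induction L generalizing m with
  | nil => simp
  | cons s L ih =>
    obtain ⟨a, rfl⟩ := List.length_eq_one_iff.mp (h s (by simp))
    cases m with
    | zero => simp
    | succ m =>
      simp [List.flatten_cons, ih (fun t ht => h t (by simp [ht])) m]

private lemma flat1_drop (L : List (List α)) (h : ∀ s ∈ L, s.length = 1) (m : ℕ) :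
    L.flatten.drop m = (L.drop m).flatten := by
  induction L generalizing m with
  | nil => simp
  | cons s L ih =>
    obtain ⟨a, rfl⟩ := List.length_eq_one_iff.mp (h s (by simp))
    cases m with
    | zero => simp
    | succ m =>
      simp [List.flatten_cons, ih (fun t ht => h t (by simp [ht])) m]

variable {σ : Type*}

private lemma chunk1 (X : List σ) (β : List ℕ) (hmem : ∀ i ∈ β, 1 ≤ i ∧ i ≤ X.length) :
    ∀ s ∈ β.map (fun i => (X.drop (i - 1)).take 1), s.length = 1 := by
  intro s hs
  simp only [List.mem_map] at hs
  obtain ⟨i, hi, rfl⟩ := hs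
  have := hmem i hi
  simp only [List.length_take, List.length_drop]
  omega

private lemma subseqIdx_length (X : List σ) (β : List ℕ)
    (hmem : ∀ i ∈ β, 1 ≤ i ∧ i ≤ X.length) : (subseqIdx X β).length = β.length := by
  rw [subseqIdx, flat1_len _ (chunk1 X β hmem), List.length_map]

private lemma subseqIdx_take (X : List σ) (β : List ℕ)
    (hmem : ∀ i ∈ β, 1 ≤ i ∧ i ≤ X.length) (m : ℕ) :
    (subseqIdx X β).take m = subseqIdx X (β.take m) := by
  rw [subseqIdx, flat1_take _ (chunk1 X β hmem), ← List.map_take, subseqIdx]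

private lemma subseqIdx_drop (X : List σ) (β : List ℕ)
    (hmem : ∀ i ∈ β, 1 ≤ i ∧ i ≤ X.length) (m : ℕ) :
    (subseqIdx X β).drop m = subseqIdx X (β.drop m) := by
  rw [subseqIdx, flat1_drop _ (chunk1 X β hmem), ← List.map_drop, subseqIdx]

private lemma subseqIdx_append (X : List σ) (β γ : List ℕ) :
    subseqIdx X (β ++ γ) = subseqIdx X β ++ subseqIdx X γ := by
  simp [subseqIdx]

private lemma subseqIdx_range' (X : List σ) :
    ∀ (n s : ℕ), subseqIdx X (List.range' (s + 1) n) = (X.drop s).take n := by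
  intro n
  induction n with
  | zero => simp [subseqIdx]
  | succ n ih =>
    intro s
    rw [List.range'_succ]
    have h1 : subseqIdx X ((s + 1) :: List.range' (s + 1 + 1) n) =
        (X.drop s).take 1 ++ subseqIdx X (List.range' (s + 1 + 1) n) := by
      simp [subseqIdx]
    rw [h1, ih (s + 1), show n + 1 = 1 + n by omega, List.take_add, List.drop_drop]

/-- The key one-step analysis. -/
private lemma step_anal (R : List (List σ × List σ)) (hdw : SRS.Dwindling R)
    (A X : List σ) (hAirr : SRS.Irreducible R A)
    (b : ℕ) (β : List ℕ) (hb : b ≤ A.length) (hchain : β.Chain' (· < ·))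
    (hmem : ∀ i ∈ β, 1 ≤ i ∧ i ≤ X.length)
    (T' : List σ) (hstep : SRS.Step R (A.take b ++ subseqIdx X β) T') :
    ∃ (b' : ℕ) (β' : List ℕ), b' ≤ A.length ∧ β'.Chain' (· < ·) ∧
      (∀ i ∈ β', 1 ≤ i ∧ i ≤ X.length) ∧
      T' = A.take b' ++ subseqIdx X β' ∧ β'.length < β.length := by
  obtain ⟨x, y, l, r, hR, hT, hT'⟩ := hstep
  obtain ⟨⟨d, hd⟩, hne⟩ := hdw (l, r) hR
  replace hd : r ++ d = l := hd
  replace hne : r ≠ l := hne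
  have hdnil : d ≠ [] := by rintro rfl; simp at hd; exact hne hd
  have hd1 : 1 ≤ d.length := List.length_pos_iff.mpr hdnil
  set Y := subseqIdx X β with hY
  set T := A.take b ++ Y with hTdef
  have hlenY : Y.length = β.length := subseqIdx_length X β hmem
  have hlenAb : (A.take b).length = b := by simp; omega
  have hTx : T = (x ++ r) ++ (d ++ y) := by rw [hT, ← hd]; simp
  have hc : b + β.length = x.length + r.length + (d.length + y.length) := by
    have := congrArg List.length hTx
    simp only [hTdef, List.length_append, hlenAb, hlenY] at this
    omega
  set q := x.length + r.length with hq
  clear_value q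
  -- the redex's deleted part ends strictly beyond position b
  have hgt : b < q + d.length := by
    by_contra hle
    push_neg at hle
    -- then x ++ l is a prefix of A.take b, hence of A; contradiction with irreducibility
    have hxl : (x ++ l).length = q + d.length := by
      simp only [List.length_append, ← hd, hq] <;> omega
    have h1 : T.take (q + d.length) = x ++ l := by
      rw [hT, show x ++ l ++ y = (x ++ l) ++ y by simp]
      exact List.take_left' hxl
    have h2 : T.take (q + d.length) = A.take (q + d.length) := by
      rw [hTdef, List.take_append, hlenAb,
        show q + d.length - b = 0 by omega, List.take_take,
        show min (q + d.length) b = q + d.length by omega]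
      simp
    have hpref : A = x ++ l ++ A.drop (q + d.length) := by
      conv_lhs => rw [← List.take_append_drop (q + d.length) A]
      rw [← h2, h1]
    exact hAirr (x ++ r ++ A.drop (q + d.length))
      ⟨x, A.drop (q + d.length), l, r, hR, hpref, rfl⟩
  have hqd_le : q + d.length ≤ b + β.length := by omega
  -- compute T'
  have hTtake : T.take q = x ++ r := by
    rw [hTx]; exact List.take_left' (by simp only [List.length_append, hq])
  have hTdrop : T.drop (q + d.length) = y := by
    rw [hTx, show (x ++ r) ++ (d ++ y) = ((x ++ r) ++ d) ++ y by simp]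
    exact List.drop_left' (by simp only [List.length_append, hq])
  have hT'eq : T' = T.take q ++ T.drop (q + d.length) := by
    rw [hT', hTtake, hTdrop]
  set m := q - b with hm
  set k := q + d.length - b with hk
  clear_value m k
  have hmk : m < k := by omega
  have hkβ : k ≤ β.length := by omega
  refine ⟨min q b, β.take m ++ β.drop k, by omega, ?_, ?_, ?_, ?_⟩
  · -- chain'
    have hsub : (β.take m ++ β.drop k).Sublist β := by
      have h1 : β.drop k = (β.drop m).drop (k - m) := by
        rw [List.drop_drop]; congr 1; omega
      have h2 : (β.drop k).Sublist (β.drop m) := by rw [h1]; exact List.drop_sublist _ _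
      have := (List.Sublist.refl (β.take m)).append h2
      rwa [List.take_append_drop] at this
    exact hchain.sublist hsub
  · intro i hi
    rcases List.mem_append.mp hi with h | h
    · exact hmem i (List.mem_of_mem_take h)
    · exact hmem i (List.mem_of_mem_drop h)
  · rw [hT'eq, hTdef, List.take_append, List.take_take,
      List.drop_append,
      List.drop_eq_nil_of_le (by rw [hlenAb]; omega),
      hlenAb, subseqIdx_append, subseqIdx_take X β hmem, subseqIdx_drop X β hmem]
    simp [hY, hm, hk]
  · rw [List.length_append, List.length_take, List.length_drop]
    omega

end helpers

theorem dwindling_reduct_decomposition' {σ : Type*}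
    (R : List (List σ × List σ)) (hdw : SRS.Dwindling R)
    (A X S : List σ) (hAirr : SRS.Irreducible R A)
    (h : SRS.Reduces R (A ++ X) S) :
    ∃ (b : ℕ) (β : List ℕ), b ≤ A.length ∧
      β.Chain' (· < ·) ∧
      (∀ i ∈ β, 1 ≤ i ∧ i ≤ X.length) ∧
      S = A.take b ++ subseqIdx X β ∧
      (S ≠ A ++ X → β.length < X.length) := by
  -- strengthen: invariant carrying the "either untouched or strictly shorter" info
  suffices H : ∃ (b : ℕ) (β : List ℕ), b ≤ A.length ∧ β.Chain' (· < ·) ∧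
      (∀ i ∈ β, 1 ≤ i ∧ i ≤ X.length) ∧ S = A.take b ++ subseqIdx X β ∧
      (β.length < X.length ∨ (S = A ++ X ∧ β.length = X.length)) by
    obtain ⟨b, β, h1, h2, h3, h4, h5⟩ := H
    exact ⟨b, β, h1, h2, h3, h4, fun hne => h5.resolve_right fun hc => hne hc.1⟩
  induction h with
  | refl =>
    refine ⟨A.length, List.range' 1 X.length, le_rfl, ?_, ?_, ?_, Or.inr ⟨rfl, by simp⟩⟩
    · have : (List.range' 1 X.length).Pairwise (· < ·) := by
        apply List.pairwise_lt_range'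
        exact Nat.one_pos
      exact this.isChain
    · intro i hi; rw [List.mem_range'_1] at hi; omega
    · rw [List.take_length, show (1 : ℕ) = 0 + 1 from rfl, subseqIdx_range']
      simp
  | tail _ hstep ih =>
    obtain ⟨b, β, h1, h2, h3, h4, h5⟩ := ih
    rw [h4] at hstep
    obtain ⟨b', β', g1, g2, g3, g4, g5⟩ := step_anal R hdw A X hAirr b β h1 h2 h3 _ hstep
    refine ⟨b', β', g1, g2, g3, g4, Or.inl ?_⟩
    rcases h5 with h5 | h5
    · omega
    · omega

theorem dwindling_reduct_decomposition {σ : Type*} [Fintype σ]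
    (R : List (List σ × List σ)) (hdw : SRS.Dwindling R) (hconv : SRS.Convergent R)
    (A X S : List σ) (hA : A ≠ []) (hAirr : SRS.Irreducible R A) (hX : X ≠ [])
    (h : SRS.Reduces R (A ++ X) S) :
    ∃ (b : ℕ) (β : List ℕ), b ≤ A.length ∧
      β.Chain' (· < ·) ∧
      (∀ i ∈ β, 1 ≤ i ∧ i ≤ X.length) ∧
      S = A.take b ++ subseqIdx X β ∧
      (S ≠ A ++ X → β.length < X.length) := by
  exact dwindling_reduct_decomposition' R hdw A X S hAirr h
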